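/- In the exact-penalty setting: if every ε ∈ [0,1]² admits a feasible (u_ε, t_ε) whose cost satisfies J(u_ε, t_ε) ≤ J(u₀, t₀) + L‖ε‖₁ for the feasible point (u₀, t₀) at ε = (0,0) (Lipschitz-type perturbation bound with constant L ≥ 0), and if min(c₁, c₂) > L, then every global minimizer of J_H = J + c₁ε_I + c₂ε_G has ε* = (0,0). -/
import Mathlib


open Set

/-- Exact-penalty property: if the feasible value function is Lipschitz in the
homotopy parameter with constant `L` (with respect to the 1-norm), and the
penalty weights both exceed `L`, then every global minimizer of the penalized
problem has homotopy parameter `ε* = (0, 0)`. -/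
theorem stmt14 {α : Type*} (Feas : α → ℝ × ℝ → Prop) (J : α → ℝ)
    (c1 c2 L : ℝ) (hL : 0 ≤ L) (hc : L < min c1 c2)
    (a0 : α) (h0 : Feas a0 (0, 0))
    (hLip : ∀ ε ∈ Icc (0:ℝ) 1 ×ˢ Icc (0:ℝ) 1, ∀ a, Feas a ε →
      J a0 ≤ J a + L * (|ε.1| + |ε.2|))
    (a' : α) (ε' : ℝ × ℝ)
    (hfeas : Feas a' ε') (hbox : ε' ∈ Icc (0:ℝ) 1 ×ˢ Icc (0:ℝ) 1)
    (hopt : ∀ a ε, Feas a ε → ε ∈ Icc (0:ℝ) 1 ×ˢ Icc (0:ℝ) 1 →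
      J a' + (c1 * ε'.1 + c2 * ε'.2) ≤ J a + (c1 * ε.1 + c2 * ε.2)) :
    ε' = (0, 0) := by
  obtain ⟨⟨h1l, h1u⟩, ⟨h2l, h2u⟩⟩ := hbox
  have hopt0 := hopt a0 (0, 0) h0 (by constructor <;> constructor <;> norm_num)
  simp only at hopt0
  have hlip := hLip ε' ⟨⟨h1l, h1u⟩, ⟨h2l, h2u⟩⟩ a' hfeas
  rw [abs_of_nonneg h1l, abs_of_nonneg h2l] at hlip
  have hc1 : L < c1 := lt_of_lt_of_le hc (min_le_left _ _)
  have hc2 : L < c2 := lt_of_lt_of_le hc (min_le_right _ _)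
  have key : c1 * ε'.1 + c2 * ε'.2 ≤ L * (ε'.1 + ε'.2) := by nlinarith
  have e1 : ε'.1 = 0 := by nlinarith
  have e2 : ε'.2 = 0 := by nlinarith
  exact Prod.ext e1 e2
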